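/- arXiv:1906.06304 — 8 statements merged into one kernel-verified Lean document; each statement's English description precedes it below -/
import Mathlib

section
/- Let n ≥ 5, S = {(1 i) : 2 ≤ i ≤ n} ⊆ Sym_n, and let φ be the map on Sym_n defined by φ(x) = (2 4)·x·(2 3)(4 5). Then φ is an automorphism of order 2 of the left Star graph Cay_L(Sym_n, S) that interchanges only non-adjacent vertices (i.e., x and φ(x) are never adjacent, and φ(x) ≠ x for all x). -/
lemma star_aux (n : ℕ) (z0 z1 z2 z3 z4 : Fin n)
    (h01 : z0 ≠ z1) (h02 : z0 ≠ z2) (h03 : z0 ≠ z3) (h04 : z0 ≠ z4)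
    (h12 : z1 ≠ z2) (h13 : z1 ≠ z3) (h14 : z1 ≠ z4)
    (h23 : z2 ≠ z3) (h24 : z2 ≠ z4) (h34 : z3 ≠ z4)
    (S : Set (Equiv.Perm (Fin n)))
    (hS : S = {σ | ∃ i : Fin n, i ≠ z0 ∧ σ = Equiv.swap z0 i})
    (Γ : SimpleGraph (Equiv.Perm (Fin n)))
    (hΓ : ∀ x y : Equiv.Perm (Fin n), Γ.Adj x y ↔ y⁻¹ * x ∈ S)
    (φ : Equiv.Perm (Fin n) → Equiv.Perm (Fin n))
    (hφ : ∀ x, φ x = Equiv.swap z1 z3 * x * (Equiv.swap z1 z2 * Equiv.swap z3 z4)) :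
    (∀ x y, Γ.Adj (φ x) (φ y) ↔ Γ.Adj x y) ∧
    (∀ x, φ (φ x) = x) ∧
    (∀ x, φ x ≠ x) ∧
    (∀ x, ¬ Γ.Adj x (φ x)) := by
  set a : Equiv.Perm (Fin n) := Equiv.swap z1 z3 with ha
  set b : Equiv.Perm (Fin n) := Equiv.swap z1 z2 * Equiv.swap z3 z4 with hb
  have hφ' : ∀ x, φ x = a * x * b := hφ
  have hcomm : Equiv.swap z1 z2 * Equiv.swap z3 z4 = Equiv.swap z3 z4 * Equiv.swap z1 z2 := by
    have hd : (Equiv.swap z1 z2).Disjoint (Equiv.swap z3 z4) := by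
      intro x
      by_cases hx1 : x = z1
      · right; subst hx1; exact Equiv.swap_apply_of_ne_of_ne h13 h14
      by_cases hx2 : x = z2
      · right; subst hx2; exact Equiv.swap_apply_of_ne_of_ne h23 h24
      · left; exact Equiv.swap_apply_of_ne_of_ne hx1 hx2
    exact hd.commute.eq
  have hbb : b * b = 1 := by
    rw [hb]
    calc Equiv.swap z1 z2 * Equiv.swap z3 z4 * (Equiv.swap z1 z2 * Equiv.swap z3 z4)
        = Equiv.swap z1 z2 * (Equiv.swap z3 z4 * Equiv.swap z1 z2) * Equiv.swap z3 z4 := by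
          group
      _ = Equiv.swap z1 z2 * (Equiv.swap z1 z2 * Equiv.swap z3 z4) * Equiv.swap z3 z4 := by
          rw [← hcomm]
      _ = (Equiv.swap z1 z2 * Equiv.swap z1 z2) * (Equiv.swap z3 z4 * Equiv.swap z3 z4) := by
          group
      _ = 1 := by rw [Equiv.swap_mul_self, Equiv.swap_mul_self, one_mul]
  have hbinv : b⁻¹ = b := by
    rw [eq_comm, eq_inv_iff_mul_eq_one, hbb]
  have hainv : a⁻¹ = a := Equiv.swap_inv z1 z3
  have hb0 : b z0 = z0 := by
    rw [hb]
    simp [Equiv.Perm.mul_apply, Equiv.swap_apply_of_ne_of_ne h03 h04,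
      Equiv.swap_apply_of_ne_of_ne h01 h02]
  have hbz1 : b z1 = z2 := by
    rw [hb]; simp [Equiv.Perm.mul_apply, Equiv.swap_apply_of_ne_of_ne h13 h14]
  have hbz2 : b z2 = z1 := by
    rw [hb]; simp [Equiv.Perm.mul_apply, Equiv.swap_apply_of_ne_of_ne h23 h24]
  have hbz3 : b z3 = z4 := by
    rw [hb]
    simp [Equiv.Perm.mul_apply, Equiv.swap_apply_of_ne_of_ne h14.symm h24.symm]
  have hbz4 : b z4 = z3 := by
    rw [hb]
    simp [Equiv.Perm.mul_apply, Equiv.swap_apply_of_ne_of_ne h13.symm h23.symm]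
  clear_value a b
  have hconj : ∀ σ, σ ∈ S → b * σ * b ∈ S := by
    intro σ hσ
    rw [hS] at hσ ⊢
    obtain ⟨i, hi, rfl⟩ := hσ
    refine ⟨b i, ?_, ?_⟩
    · intro h
      apply hi
      have : b i = b z0 := by rw [hb0]; exact h
      exact b.injective this
    · have : Equiv.swap (b z0) (b i) = b * Equiv.swap z0 i * b⁻¹ :=
        Equiv.swap_apply_apply b z0 i
      rw [hb0, hbinv] at this
      exact this.symm
  have hmemiff : ∀ σ, b * σ * b ∈ S ↔ σ ∈ S := by
    intro σ
    constructor
    · intro h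
      have h2 := hconj _ h
      have : b * (b * σ * b) * b = σ := by
        calc b * (b * σ * b) * b = (b * b) * σ * (b * b) := by group
          _ = σ := by rw [hbb]; group
      rwa [this] at h2
    · exact hconj σ
  refine ⟨?_, ?_, ?_, ?_⟩
  · intro x y
    rw [hΓ, hΓ, hφ', hφ']
    have h1 : (a * y * b)⁻¹ * (a * x * b) = b⁻¹ * y⁻¹ * (a⁻¹ * a) * x * b := by group
    have h2 : (a * y * b)⁻¹ * (a * x * b) = b * (y⁻¹ * x) * b := by
      rw [h1, hainv, ha, Equiv.swap_mul_self, hbinv]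
      group
    rw [h2, hmemiff]
  · intro x
    rw [hφ', hφ']
    calc a * (a * x * b) * b = (a * a) * x * (b * b) := by group
      _ = x := by rw [hbb, ha, Equiv.swap_mul_self]; group
  · intro x hx
    have hs := congrArg Equiv.Perm.sign hx
    rw [hφ', ha, hb] at hs
    simp only [map_mul, Equiv.Perm.sign_swap h13, Equiv.Perm.sign_swap h12,
      Equiv.Perm.sign_swap h34] at hs
    rcases Int.units_eq_one_or (Equiv.Perm.sign x) with h | h <;> rw [h] at hs <;>
      simp at hs
  · intro x hadj
    rw [hΓ, hS, hφ'] at hadj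
    obtain ⟨i, hi, heq⟩ := hadj
    set u : Fin n := x⁻¹ z1 with hu
    set v : Fin n := x⁻¹ z3 with hv
    have huv : (a * x * b)⁻¹ * x = b * Equiv.swap u v := by
      have hsw : Equiv.swap u v = x⁻¹ * Equiv.swap z1 z3 * (x⁻¹)⁻¹ :=
        Equiv.swap_apply_apply x⁻¹ z1 z3
      rw [hsw, ← ha, mul_inv_rev, mul_inv_rev, hainv, hbinv]
      group
    rw [huv] at heq
    have hE : Equiv.swap u v = b * Equiv.swap z0 i := by
      have h2 := congrArg (fun σ => b * σ) heq
      rw [← mul_assoc, hbb, one_mul] at h2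
      exact h2
    have hmoves : ∀ j : Fin n, (j = z1 ∨ j = z2 ∨ j = z3 ∨ j = z4) → j ≠ i →
        j = u ∨ j = v := by
      intro j hj hji
      have hj0 : j ≠ z0 := by
        rcases hj with rfl | rfl | rfl | rfl
        exacts [h01.symm, h02.symm, h03.symm, h04.symm]
      have hswapj : Equiv.swap z0 i j = j := Equiv.swap_apply_of_ne_of_ne hj0 hji
      have happ : Equiv.swap u v j = b j := by
        have h3 := congrArg (fun σ : Equiv.Perm (Fin n) => σ j) hE
        simpa [Equiv.Perm.mul_apply, hswapj] using h3
      have hbj : b j ≠ j := by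
        rcases hj with rfl | rfl | rfl | rfl
        · rw [hbz1]; exact h12.symm
        · rw [hbz2]; exact h12
        · rw [hbz3]; exact h34.symm
        · rw [hbz4]; exact h34
      by_contra hcon
      push_neg at hcon
      rw [Equiv.swap_apply_of_ne_of_ne hcon.1 hcon.2] at happ
      exact hbj happ.symm
    have hsub : ({z1, z2, z3, z4} : Finset (Fin n)).erase i ⊆ ({u, v} : Finset (Fin n)) := by
      intro j hj
      rw [Finset.mem_erase] at hj
      have hj' : j = z1 ∨ j = z2 ∨ j = z3 ∨ j = z4 := by
        simpa [Finset.mem_insert] using hj.2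
      rcases hmoves j hj' hj.1 with h | h <;> simp [h]
    have hc4 : ({z1, z2, z3, z4} : Finset (Fin n)).card = 4 := by
      rw [Finset.card_insert_of_notMem (by simp [h12, h13, h14]),
        Finset.card_insert_of_notMem (by simp [h23, h24]),
        Finset.card_insert_of_notMem (by simp [h34]), Finset.card_singleton]
    have hcl := Finset.pred_card_le_card_erase
      (s := ({z1, z2, z3, z4} : Finset (Fin n))) (a := i)
    have hcu : (({u, v} : Finset (Fin n))).card ≤ 2 :=
      (Finset.card_insert_le _ _).trans (by simp)
    have := Finset.card_le_card hsub
    omega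

/-- For `n ≥ 5`, with `Sym_n = Equiv.Perm (Fin n)` (0-based: `0,1,2,3,4`
play the roles of `1,2,3,4,5`) and `S = {swap 0 i : i ≠ 0}`, the map
`φ(x) = (2 4) * x * (2 3)(4 5)` (0-based: `swap 1 3 * x * swap 1 2 * swap 3 4`)
is an order-2 automorphism of the left Star graph `Cay_L(Sym_n, S)` that
interchanges only non-adjacent vertices. -/
theorem star_graph_dual_seidel_involution
    (n : ℕ) (hn : 5 ≤ n)
    (S : Set (Equiv.Perm (Fin n)))
    (hS : S = {σ | ∃ i : Fin n, i ≠ ⟨0, by omega⟩ ∧ σ = Equiv.swap ⟨0, by omega⟩ i})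
    (Γ : SimpleGraph (Equiv.Perm (Fin n)))
    (hΓ : ∀ x y : Equiv.Perm (Fin n), Γ.Adj x y ↔ y⁻¹ * x ∈ S)
    (φ : Equiv.Perm (Fin n) → Equiv.Perm (Fin n))
    (hφ : ∀ x, φ x = Equiv.swap (⟨1, by omega⟩ : Fin n) ⟨3, by omega⟩ * x *
      (Equiv.swap (⟨1, by omega⟩ : Fin n) ⟨2, by omega⟩ *
        Equiv.swap (⟨3, by omega⟩ : Fin n) ⟨4, by omega⟩)) :
    (∀ x y, Γ.Adj (φ x) (φ y) ↔ Γ.Adj x y) ∧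
    (∀ x, φ (φ x) = x) ∧
    (∀ x, φ x ≠ x) ∧
    (∀ x, ¬ Γ.Adj x (φ x)) := by
  exact star_aux n ⟨0, by omega⟩ ⟨1, by omega⟩ ⟨2, by omega⟩ ⟨3, by omega⟩ ⟨4, by omega⟩
    (by simp [Fin.ext_iff]) (by simp [Fin.ext_iff]) (by simp [Fin.ext_iff])
    (by simp [Fin.ext_iff]) (by simp [Fin.ext_iff]) (by simp [Fin.ext_iff])
    (by simp [Fin.ext_iff]) (by simp [Fin.ext_iff]) (by simp [Fin.ext_iff])
    (by simp [Fin.ext_iff]) S hS Γ hΓ φ hφ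
end

section
/- Let π_ℓ, π_r ∈ Sym_n be involutions of different parity with π_r S π_r⁻¹ = S, where S = {(1 i) : 2 ≤ i ≤ n}, and suppose π_ℓ is not conjugate to any element of π_r S. Then the map φ(x) = π_ℓ x π_r is an order-2 automorphism of Cay_L(Sym_n, S) such that x and φ(x) are non-adjacent for all x. -/
/-- Let `π_ℓ, π_r ∈ Sym_n` be involutions of different parity with
`π_r S π_r⁻¹ = S`, where `S = {swap 0 i : i ≠ 0}` (0-based), and suppose `π_ℓ`
is not conjugate to any element of `π_r S`. Then `φ(x) = π_ℓ * x * π_r` is an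
order-2 automorphism of `Cay_L(Sym_n, S)` such that `x` and `φ x` are
non-adjacent for all `x`. -/
theorem star_graph_involution_of_good_pair
    (n : ℕ) (hn : 3 ≤ n)
    (S : Set (Equiv.Perm (Fin n)))
    (hS : S = {σ | ∃ i : Fin n, i ≠ ⟨0, by omega⟩ ∧ σ = Equiv.swap ⟨0, by omega⟩ i})
    (Γ : SimpleGraph (Equiv.Perm (Fin n)))
    (hΓ : ∀ x y : Equiv.Perm (Fin n), Γ.Adj x y ↔ y⁻¹ * x ∈ S)
    (πl πr : Equiv.Perm (Fin n))
    (hl2 : orderOf πl = 2) (hr2 : orderOf πr = 2)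
    (hparity : Equiv.Perm.sign πl ≠ Equiv.Perm.sign πr)
    (hconjS : (fun s => πr * s * πr⁻¹) '' S = S)
    (hnotconj : ∀ g : Equiv.Perm (Fin n), ∀ s ∈ S, g⁻¹ * πl * g ≠ πr * s)
    (φ : Equiv.Perm (Fin n) → Equiv.Perm (Fin n))
    (hφ : ∀ x, φ x = πl * x * πr) :
    (∀ x y, Γ.Adj (φ x) (φ y) ↔ Γ.Adj x y) ∧
    (∀ x, φ (φ x) = x) ∧
    (∃ x, φ x ≠ x) ∧
    (∀ x, ¬ Γ.Adj x (φ x)) := by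
  have hl : πl * πl = 1 := by
    have := pow_orderOf_eq_one πl; rw [hl2] at this; simpa [sq] using this
  have hr : πr * πr = 1 := by
    have := pow_orderOf_eq_one πr; rw [hr2] at this; simpa [sq] using this
  have hlinv : πl⁻¹ = πl := by rw [inv_eq_iff_mul_eq_one]; exact hl
  have hrinv : πr⁻¹ = πr := by rw [inv_eq_iff_mul_eq_one]; exact hr
  have hcl : ∀ t : Equiv.Perm (Fin n), πl * (πl * t) = t := fun t => by
    rw [← mul_assoc, hl, one_mul]
  have hcr : ∀ t : Equiv.Perm (Fin n), πr * (πr * t) = t := fun t => by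
    rw [← mul_assoc, hr, one_mul]
  have key : ∀ t, t ∈ S → πr * t * πr ∈ S := by
    intro t ht
    have : πr * t * πr⁻¹ ∈ (fun s => πr * s * πr⁻¹) '' S := Set.mem_image_of_mem _ ht
    rw [hconjS, hrinv] at this; exact this
  have key2 : ∀ t, t ∈ S ↔ πr * t * πr ∈ S := by
    intro t
    refine ⟨key t, fun h => ?_⟩
    have := key _ h
    have e : πr * (πr * t * πr) * πr = t := by
      simp only [mul_assoc, hr, mul_one]; rw [hcr]
    rwa [e] at this
  refine ⟨?_, ?_, ?_, ?_⟩
  · intro x y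
    rw [hΓ, hΓ, hφ, hφ]
    have e : (πl * y * πr)⁻¹ * (πl * x * πr) = πr * (y⁻¹ * x) * πr := by
      simp only [mul_inv_rev, hlinv, hrinv, mul_assoc, hcl]
    rw [e]
    exact (key2 _).symm
  · intro x
    rw [hφ, hφ]
    simp only [mul_assoc, hr, mul_one]; rw [hcl]
  · refine ⟨1, ?_⟩
    rw [hφ, mul_one]
    intro h
    apply hparity
    have : πl = πr⁻¹ := eq_inv_of_mul_eq_one_left h
    rw [this, hrinv]
  · intro x
    rw [hΓ, hφ]
    intro h
    have e : (πl * x * πr)⁻¹ * x = πr * (x⁻¹ * πl * x) := by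
      simp only [mul_inv_rev, hlinv, hrinv, mul_assoc]
    rw [e] at h
    set t := πr * (x⁻¹ * πl * x) with ht
    have e2 : x⁻¹ * πl * x = πr * t := by
      rw [ht, mul_assoc, hcr]
    exact hnotconj x t h e2
end

section
/- Let Γ be a simple graph with adjacency matrix A, and let φ be an automorphism of Γ of order 2 that interchanges only non-adjacent vertices, with permutation matrix P. Then PA is a symmetric (0,1)-matrix with zero diagonal, i.e., PA is the adjacency matrix of a simple graph. -/
/-- If `φ` is an order-2 automorphism of a simple graph `Γ`
interchanging only non-adjacent vertices, `A` the adjacency matrix and `P` the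
permutation matrix of `φ`, then `P * A` is a symmetric (0,1)-matrix with zero
diagonal, i.e. the adjacency matrix of a simple graph. -/
theorem dual_seidel_switching_gives_adjacency_matrix
    {V : Type*} [Fintype V] [DecidableEq V]
    (Γ : SimpleGraph V) [DecidableRel Γ.Adj]
    (φ : Γ ≃g Γ) (hinv : ∀ v, φ (φ v) = v)
    (hnonadj : ∀ v, φ v ≠ v → ¬ Γ.Adj v (φ v))
    (A P : Matrix V V ℝ)
    (hA : A = Γ.adjMatrix ℝ)
    (hP : P = Matrix.of fun i j => if i = φ j then 1 else 0) :
    Matrix.transpose (P * A) = P * A ∧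
    (∀ i j, (P * A) i j = 0 ∨ (P * A) i j = 1) ∧
    (∀ i, (P * A) i i = 0) := by
  have key : ∀ i j, (P * A) i j = A (φ i) j := by
    intro i j
    rw [Matrix.mul_apply, hP]
    rw [Finset.sum_eq_single (φ i)]
    · simp [hinv]
    · intro k _ hk
      have : i ≠ φ k := by
        intro h
        apply hk
        rw [h, hinv]
      simp [this]
    · intro h
      exact absurd (Finset.mem_univ _) h
  refine ⟨?_, ?_, ?_⟩
  · ext i j
    rw [Matrix.transpose_apply, key, key, hA]
    simp only [SimpleGraph.adjMatrix_apply]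
    have symmlem : ∀ a b : V, Γ.Adj (φ a) b → Γ.Adj (φ b) a := by
      intro a b h
      have h2 : Γ.Adj (φ (φ a)) (φ b) := φ.map_adj_iff.mpr h
      rw [hinv] at h2
      exact h2.symm
    have hiff : Γ.Adj (φ j) i ↔ Γ.Adj (φ i) j := ⟨symmlem j i, symmlem i j⟩
    by_cases h : Γ.Adj (φ i) j
    · simp [h, hiff.mpr h]
    · have h2 : ¬ Γ.Adj (φ j) i := fun h' => h (hiff.mp h')
      simp [h, h2]
  · intro i j
    rw [key, hA]
    by_cases h : Γ.Adj (φ i) j <;> simp [h]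
  · intro i
    rw [key, hA]
    have : ¬ Γ.Adj (φ i) i := by
      by_cases h : φ i = i
      · rw [h]; exact Γ.irrefl
      · intro hadj
        exact hnonadj i (h) (hadj.symm)
    simp [this]
end

section
/- Let Γ be a simple graph with adjacency matrix A and let P be the permutation matrix of an order-2 automorphism of Γ that interchanges only non-adjacent vertices. Then (PA)² = A². In particular, if all eigenvalues of A are integers, then all eigenvalues of PA are integers. -/
lemma mem_spectrum_iff_eigen {V : Type*} [Fintype V] [DecidableEq V]
    (M : Matrix V V ℝ) (μ : ℝ) :
    μ ∈ spectrum ℝ M ↔ ∃ v : V → ℝ, v ≠ 0 ∧ M.mulVec v = μ • v := by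
  rw [spectrum.mem_iff]
  rw [Matrix.isUnit_iff_isUnit_det, isUnit_iff_ne_zero, not_not,
    ← Matrix.exists_mulVec_eq_zero_iff]
  have key : ∀ v : V → ℝ, (algebraMap ℝ (Matrix V V ℝ) μ - M).mulVec v = μ • v - M.mulVec v := by
    intro v
    rw [Matrix.sub_mulVec]
    congr 1
    simp [Algebra.algebraMap_eq_smul_one, Matrix.smul_mulVec]
  constructor
  · rintro ⟨v, hv, h⟩
    exact ⟨v, hv, by rw [key] at h; exact (sub_eq_zero.mp h).symm⟩
  · rintro ⟨v, hv, h⟩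
    exact ⟨v, hv, by rw [key, h, sub_self]⟩

/-- With `A` the adjacency matrix of `Γ` and `P` the permutation
matrix of an order-2 automorphism interchanging only non-adjacent vertices,
`(PA)² = A²`; in particular if all eigenvalues of `A` are integers then so are
all eigenvalues of `PA`. -/
theorem dual_seidel_switching_square_and_integrality
    {V : Type*} [Fintype V] [DecidableEq V]
    (Γ : SimpleGraph V) [DecidableRel Γ.Adj]
    (φ : Γ ≃g Γ) (hinv : ∀ v, φ (φ v) = v)
    (hnonadj : ∀ v, φ v ≠ v → ¬ Γ.Adj v (φ v))
    (A P : Matrix V V ℝ)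
    (hA : A = Γ.adjMatrix ℝ)
    (hP : P = Matrix.of fun i j => if i = φ j then 1 else 0) :
    (P * A) * (P * A) = A * A ∧
    ((∀ μ ∈ spectrum ℝ A, ∃ k : ℤ, μ = (k : ℝ)) →
      ∀ μ ∈ spectrum ℝ (P * A), ∃ k : ℤ, μ = (k : ℝ)) := by
  have hiff : ∀ i k : V, i = φ k ↔ φ i = k := by
    intro i k
    constructor
    · rintro rfl; exact hinv k
    · rintro rfl; exact (hinv i).symm
  have hPM : ∀ (M : Matrix V V ℝ) i j, (P * M) i j = M (φ i) j := by
    intro M i j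
    simp only [Matrix.mul_apply, hP, Matrix.of_apply, ite_mul, one_mul, zero_mul]
    have h : ∀ x : V, (if i = φ x then M x j else 0) = if φ i = x then M x j else 0 := by
      intro x; exact if_congr (hiff i x) rfl rfl
    simp_rw [h]
    simp
  have hMP : ∀ (M : Matrix V V ℝ) i j, (M * P) i j = M i (φ j) := by
    intro M i j
    simp only [Matrix.mul_apply, hP, Matrix.of_apply, mul_ite, mul_one, mul_zero]
    simp
  have hAadj : ∀ i j, A (φ i) (φ j) = A i j := by
    intro i j
    simp [hA, SimpleGraph.adjMatrix_apply, φ.map_adj_iff]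
  have hPAP : P * A * P = A := by
    ext i j
    rw [hMP (P * A) i j, hPM A i (φ j), hAadj]
  have hsq : (P * A) * (P * A) = A * A := by
    rw [← mul_assoc (P * A) P A, hPAP]
  refine ⟨hsq, ?_⟩
  intro hint μ hμ
  rw [mem_spectrum_iff_eigen] at hμ
  obtain ⟨v, hv, hev⟩ := hμ
  have hAAv : A.mulVec (A.mulVec v) = (μ * μ) • v := by
    have h1 : (A * A).mulVec v = ((P * A) * (P * A)).mulVec v := by rw [hsq]
    rw [← Matrix.mulVec_mulVec, ← Matrix.mulVec_mulVec, hev, Matrix.mulVec_smul, hev,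
      smul_smul] at h1
    exact h1
  set w := A.mulVec v + μ • v with hw_def
  by_cases hw0 : w = 0
  · have hAv : A.mulVec v = (-μ) • v := by
      have : A.mulVec v + μ • v = 0 := hw0
      rw [neg_smul]
      linear_combination (norm := module) this
    have hspec : -μ ∈ spectrum ℝ A := (mem_spectrum_iff_eigen A (-μ)).mpr ⟨v, hv, hAv⟩
    obtain ⟨k, hk⟩ := hint (-μ) hspec
    exact ⟨-k, by push_cast; linarith⟩
  · have hAw : A.mulVec w = μ • w := by
      rw [hw_def, Matrix.mulVec_add, Matrix.mulVec_smul, hAAv]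
      module
    have hspec : μ ∈ spectrum ℝ A := (mem_spectrum_iff_eigen A μ).mpr ⟨w, hw0, hAw⟩
    exact hint μ hspec
end

section
/- Let m ≥ 2 and 1 ≤ t ≤ m−1. The permutation τ_t = (1 2)(3 4)···(2t−1 2t) of the (2m+1)-set X induces an involution of the Odd graph O_{m+1} (vertices are m-subsets of X, adjacency is disjointness) such that for every m-subset Y, the sets Y and τ_t(Y) are not disjoint (i.e., the induced automorphism interchanges only non-adjacent vertices). -/
/-- Let `m ≥ 2`, `1 ≤ t ≤ m-1`, and let `τ = (0 1)(2 3)⋯(2t-2 2t-1)`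
(0-based version of `(1 2)⋯(2t-1 2t)`) be the permutation of `Fin (2m+1)`
swapping `2k ↔ 2k+1` for `k < t`. Then `τ` is an involution and, acting
elementwise on the `m`-subsets (the vertices of the Odd graph `O_{m+1}`, where
adjacency is disjointness), it interchanges only non-adjacent vertices: for
every `m`-subset `Y`, the sets `Y` and `τ(Y)` are not disjoint. -/
theorem odd_graph_tau_t_interchanges_only_nonadjacent
    (m t : ℕ) (hm : 2 ≤ m) (ht1 : 1 ≤ t) (ht2 : t ≤ m - 1)
    (τ : Equiv.Perm (Fin (2 * m + 1)))
    (hτ : ∀ x : Fin (2 * m + 1),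
      (τ x).val = if x.val < 2 * t then 2 * (x.val / 2) + (1 - x.val % 2) else x.val) :
    τ * τ = 1 ∧
    ∀ Y : Finset (Fin (2 * m + 1)), Y.card = m →
      ((Y.image τ).card = m ∧ (Y.image τ).image τ = Y ∧ ¬ Disjoint Y (Y.image τ)) := by
  have hinv : ∀ x : Fin (2 * m + 1), τ (τ x) = x := by
    intro x
    apply Fin.ext
    rw [hτ (τ x), hτ x]
    split_ifs <;> omega
  constructor
  · ext x
    simpa using congrArg Fin.val (hinv x)
  · intro Y hY
    refine ⟨?_, ?_, ?_⟩
    · rw [Finset.card_image_of_injective Y τ.injective, hY]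
    · rw [Finset.image_image]
      have hcomp : (τ ∘ τ) = id := funext hinv
      rw [hcomp, Finset.image_id]
    · rw [Finset.not_disjoint_iff]
      by_cases hall : ∀ x ∈ Y, x.val < 2 * t
      · obtain ⟨x, hx, y, hy, hxy, hf⟩ :=
          Finset.exists_ne_map_eq_of_card_lt_of_maps_to
            (s := Y) (t := Finset.range t) (f := fun a => a.val / 2)
            (by rw [hY, Finset.card_range]; omega)
            (fun a ha => Finset.mem_range.2 (by simpa using Nat.div_lt_of_lt_mul (by simpa [Nat.mul_comm] using hall a ha)))
        have hxy' : x.val ≠ y.val := fun h => hxy (Fin.ext h)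
        have hτx : τ x = y := by
          apply Fin.ext
          rw [hτ x, if_pos (hall x hx)]
          omega
        exact ⟨y, hy, Finset.mem_image.2 ⟨x, hx, hτx⟩⟩
      · push_neg at hall
        obtain ⟨x, hx, hge⟩ := hall
        have hτx : τ x = x := Fin.ext (by rw [hτ x, if_neg (by omega)])
        exact ⟨x, hx, Finset.mem_image.2 ⟨x, hx, hτx⟩⟩
end

section
/- Let m ≥ 2 and fix distinct i, j ∈ {1,...,2m+1}. The partition of the vertex set of the Odd graph O_{m+1} into V_{i,j} (m-subsets containing both i and j), V_{i,j̄} (containing i, not j), V_{ī,j} (containing j, not i), and V_{ī,j̄} (containing neither) is equitable: every vertex in V_{i,j} has exactly m+1 neighbors in V_{ī,j̄} and no neighbors elsewhere; every vertex in V_{i,j̄} has exactly m neighbors in V_{ī,j} and 1 neighbor in V_{ī,j̄}; every vertex in V_{ī,j} has exactly m neighbors in V_{i,j̄} and 1 neighbor in V_{ī,j̄}; every vertex in V_{ī,j̄} has exactly m−1 neighbors in V_{i,j}, 1 in V_{i,j̄}, and 1 in V_{ī,j}. -/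
open Finset

lemma count_eq_aux (m : ℕ) (Y : Finset (Fin (2 * m + 1))) (hY : Y.card = m)
    (Q : Finset (Fin (2 * m + 1)) → Prop) [DecidablePred Q] :
    Nat.card {Z : Finset (Fin (2 * m + 1)) // Z.card = m ∧ Disjoint Y Z ∧ Q Z}
      = (Yᶜ.filter (fun x => Q (Yᶜ.erase x))).card := by
  have hC : Yᶜ.card = m + 1 := by
    rw [Finset.card_compl, Fintype.card_fin, hY]; omega
  rw [Nat.card_eq_fintype_card, Fintype.card_subtype]
  refine (Finset.card_bij (fun x _ => Yᶜ.erase x) ?_ ?_ ?_).symm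
  · intro x hx
    simp only [mem_filter] at hx ⊢
    refine ⟨mem_univ _, ?_, ?_, hx.2⟩
    · rw [card_erase_of_mem hx.1, hC]; omega
    · exact disjoint_compl_right.mono_right (erase_subset _ _)
  · intro x hx y hy h
    simp only [mem_filter] at hx hy
    exact Finset.erase_injOn _ hx.1 hy.1 h
  · intro Z hZ
    simp only [mem_filter, mem_univ, true_and] at hZ
    obtain ⟨hZc, hdisj, hQ⟩ := hZ
    have hsub : Z ⊆ Yᶜ := fun a ha => mem_compl.2 (disjoint_right.1 hdisj ha)
    have hcd : (Yᶜ \ Z).card = 1 := by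
      rw [card_sdiff_of_subset hsub, hC, hZc]; omega
    obtain ⟨x, hx⟩ := Finset.card_eq_one.1 hcd
    have hxC : x ∈ Yᶜ ∧ x ∉ Z := by
      have : x ∈ Yᶜ \ Z := hx ▸ mem_singleton_self x
      exact ⟨(mem_sdiff.1 this).1, (mem_sdiff.1 this).2⟩
    have hZe : Z = Yᶜ.erase x := by
      apply Finset.eq_of_subset_of_card_le
      · intro a ha
        exact mem_erase.2 ⟨fun h => hxC.2 (h ▸ ha), hsub ha⟩
      · rw [card_erase_of_mem hxC.1, hC, hZc]; omega
    exact ⟨x, mem_filter.2 ⟨hxC.1, hZe ▸ hQ⟩, hZe.symm⟩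

/-- The partition of the vertices of the Odd graph `O_{m+1}`
(`m`-subsets of `Fin (2m+1)`, adjacency = disjointness) according to containment
of two fixed distinct points `i, j` is equitable, with the quotient matrix given
in the paper: the number of neighbors of a vertex in each class depends only on
the class of the vertex. -/
theorem odd_graph_partition_equitable
    (m : ℕ) (hm : 2 ≤ m) (i j : Fin (2 * m + 1)) (hij : i ≠ j) :
    ∀ Y : Finset (Fin (2 * m + 1)), Y.card = m →
      ((i ∈ Y ∧ j ∈ Y) →
        (Nat.card {Z : Finset (Fin (2 * m + 1)) //
            Z.card = m ∧ Disjoint Y Z ∧ i ∉ Z ∧ j ∉ Z} = m + 1 ∧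
         Nat.card {Z : Finset (Fin (2 * m + 1)) //
            Z.card = m ∧ Disjoint Y Z ∧ i ∈ Z ∧ j ∈ Z} = 0 ∧
         Nat.card {Z : Finset (Fin (2 * m + 1)) //
            Z.card = m ∧ Disjoint Y Z ∧ i ∈ Z ∧ j ∉ Z} = 0 ∧
         Nat.card {Z : Finset (Fin (2 * m + 1)) //
            Z.card = m ∧ Disjoint Y Z ∧ i ∉ Z ∧ j ∈ Z} = 0)) ∧
      ((i ∈ Y ∧ j ∉ Y) →
        (Nat.card {Z : Finset (Fin (2 * m + 1)) //
            Z.card = m ∧ Disjoint Y Z ∧ i ∉ Z ∧ j ∈ Z} = m ∧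
         Nat.card {Z : Finset (Fin (2 * m + 1)) //
            Z.card = m ∧ Disjoint Y Z ∧ i ∉ Z ∧ j ∉ Z} = 1 ∧
         Nat.card {Z : Finset (Fin (2 * m + 1)) //
            Z.card = m ∧ Disjoint Y Z ∧ i ∈ Z ∧ j ∈ Z} = 0 ∧
         Nat.card {Z : Finset (Fin (2 * m + 1)) //
            Z.card = m ∧ Disjoint Y Z ∧ i ∈ Z ∧ j ∉ Z} = 0)) ∧
      ((i ∉ Y ∧ j ∈ Y) →
        (Nat.card {Z : Finset (Fin (2 * m + 1)) //
            Z.card = m ∧ Disjoint Y Z ∧ i ∈ Z ∧ j ∉ Z} = m ∧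
         Nat.card {Z : Finset (Fin (2 * m + 1)) //
            Z.card = m ∧ Disjoint Y Z ∧ i ∉ Z ∧ j ∉ Z} = 1 ∧
         Nat.card {Z : Finset (Fin (2 * m + 1)) //
            Z.card = m ∧ Disjoint Y Z ∧ i ∈ Z ∧ j ∈ Z} = 0 ∧
         Nat.card {Z : Finset (Fin (2 * m + 1)) //
            Z.card = m ∧ Disjoint Y Z ∧ i ∉ Z ∧ j ∈ Z} = 0)) ∧
      ((i ∉ Y ∧ j ∉ Y) →
        (Nat.card {Z : Finset (Fin (2 * m + 1)) //
            Z.card = m ∧ Disjoint Y Z ∧ i ∈ Z ∧ j ∈ Z} = m - 1 ∧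
         Nat.card {Z : Finset (Fin (2 * m + 1)) //
            Z.card = m ∧ Disjoint Y Z ∧ i ∈ Z ∧ j ∉ Z} = 1 ∧
         Nat.card {Z : Finset (Fin (2 * m + 1)) //
            Z.card = m ∧ Disjoint Y Z ∧ i ∉ Z ∧ j ∈ Z} = 1 ∧
         Nat.card {Z : Finset (Fin (2 * m + 1)) //
            Z.card = m ∧ Disjoint Y Z ∧ i ∉ Z ∧ j ∉ Z} = 0)) := by
  intro Y hY
  have hC : Yᶜ.card = m + 1 := by
    rw [Finset.card_compl, Fintype.card_fin, hY]; omega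
  refine ⟨?_, ?_, ?_, ?_⟩
  · rintro ⟨hi, hj⟩
    have hiC : i ∉ Yᶜ := by simp [hi]
    have hjC : j ∉ Yᶜ := by simp [hj]
    refine ⟨?_, ?_, ?_, ?_⟩
    · rw [count_eq_aux m Y hY (fun Z => i ∉ Z ∧ j ∉ Z)]
      have h : Yᶜ.filter (fun x => i ∉ Yᶜ.erase x ∧ j ∉ Yᶜ.erase x) = Yᶜ := by
        ext x; simp only [mem_filter, mem_erase, and_iff_left_iff_imp]
        intro hx
        exact ⟨fun h => hiC h.2, fun h => hjC h.2⟩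
      rw [h, hC]
    · rw [count_eq_aux m Y hY (fun Z => i ∈ Z ∧ j ∈ Z)]
      rw [Finset.card_eq_zero, Finset.filter_eq_empty_iff]
      intro x _ h
      exact hiC (mem_of_mem_erase h.1)
    · rw [count_eq_aux m Y hY (fun Z => i ∈ Z ∧ j ∉ Z)]
      rw [Finset.card_eq_zero, Finset.filter_eq_empty_iff]
      intro x _ h
      exact hiC (mem_of_mem_erase h.1)
    · rw [count_eq_aux m Y hY (fun Z => i ∉ Z ∧ j ∈ Z)]
      rw [Finset.card_eq_zero, Finset.filter_eq_empty_iff]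
      intro x _ h
      exact hjC (mem_of_mem_erase h.2)
  · rintro ⟨hi, hj⟩
    have hiC : i ∉ Yᶜ := by simp [hi]
    have hjC : j ∈ Yᶜ := by simp [hj]
    refine ⟨?_, ?_, ?_, ?_⟩
    · rw [count_eq_aux m Y hY (fun Z => i ∉ Z ∧ j ∈ Z)]
      have h : Yᶜ.filter (fun x => i ∉ Yᶜ.erase x ∧ j ∈ Yᶜ.erase x) = Yᶜ.erase j := by
        ext x
        simp only [mem_filter, mem_erase]
        constructor
        · rintro ⟨hx, -, hne, -⟩; exact ⟨fun h => hne h.symm, hx⟩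
        · rintro ⟨hne, hx⟩
          exact ⟨hx, fun h => hiC h.2, fun h => hne h.symm, hjC⟩
      rw [h, card_erase_of_mem hjC, hC]; omega
    · rw [count_eq_aux m Y hY (fun Z => i ∉ Z ∧ j ∉ Z)]
      have h : Yᶜ.filter (fun x => i ∉ Yᶜ.erase x ∧ j ∉ Yᶜ.erase x) = {j} := by
        ext x
        simp only [mem_filter, mem_erase, mem_singleton]
        constructor
        · rintro ⟨hx, -, hnj⟩
          by_contra hne
          exact hnj ⟨fun h => hne h.symm, hjC⟩
        · rintro rfl
          exact ⟨hjC, fun h => hiC h.2, fun h => h.1 rfl⟩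
      rw [h, card_singleton]
    · rw [count_eq_aux m Y hY (fun Z => i ∈ Z ∧ j ∈ Z)]
      rw [Finset.card_eq_zero, Finset.filter_eq_empty_iff]
      intro x _ h
      exact hiC (mem_of_mem_erase h.1)
    · rw [count_eq_aux m Y hY (fun Z => i ∈ Z ∧ j ∉ Z)]
      rw [Finset.card_eq_zero, Finset.filter_eq_empty_iff]
      intro x _ h
      exact hiC (mem_of_mem_erase h.1)
  · rintro ⟨hi, hj⟩
    have hiC : i ∈ Yᶜ := by simp [hi]
    have hjC : j ∉ Yᶜ := by simp [hj]
    refine ⟨?_, ?_, ?_, ?_⟩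
    · rw [count_eq_aux m Y hY (fun Z => i ∈ Z ∧ j ∉ Z)]
      have h : Yᶜ.filter (fun x => i ∈ Yᶜ.erase x ∧ j ∉ Yᶜ.erase x) = Yᶜ.erase i := by
        ext x
        simp only [mem_filter, mem_erase]
        constructor
        · rintro ⟨hx, ⟨hne, -⟩, -⟩; exact ⟨fun h => hne h.symm, hx⟩
        · rintro ⟨hne, hx⟩
          exact ⟨hx, ⟨fun h => hne h.symm, hiC⟩, fun h => hjC h.2⟩
      rw [h, card_erase_of_mem hiC, hC]; omega
    · rw [count_eq_aux m Y hY (fun Z => i ∉ Z ∧ j ∉ Z)]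
      have h : Yᶜ.filter (fun x => i ∉ Yᶜ.erase x ∧ j ∉ Yᶜ.erase x) = {i} := by
        ext x
        simp only [mem_filter, mem_erase, mem_singleton]
        constructor
        · rintro ⟨hx, hni, -⟩
          by_contra hne
          exact hni ⟨fun h => hne h.symm, hiC⟩
        · rintro rfl
          exact ⟨hiC, fun h => h.1 rfl, fun h => hjC h.2⟩
      rw [h, card_singleton]
    · rw [count_eq_aux m Y hY (fun Z => i ∈ Z ∧ j ∈ Z)]
      rw [Finset.card_eq_zero, Finset.filter_eq_empty_iff]
      intro x _ h
      exact hjC (mem_of_mem_erase h.2)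
    · rw [count_eq_aux m Y hY (fun Z => i ∉ Z ∧ j ∈ Z)]
      rw [Finset.card_eq_zero, Finset.filter_eq_empty_iff]
      intro x _ h
      exact hjC (mem_of_mem_erase h.2)
  · rintro ⟨hi, hj⟩
    have hiC : i ∈ Yᶜ := by simp [hi]
    have hjC : j ∈ Yᶜ := by simp [hj]
    refine ⟨?_, ?_, ?_, ?_⟩
    · rw [count_eq_aux m Y hY (fun Z => i ∈ Z ∧ j ∈ Z)]
      have h : Yᶜ.filter (fun x => i ∈ Yᶜ.erase x ∧ j ∈ Yᶜ.erase x)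
          = (Yᶜ.erase i).erase j := by
        ext x
        simp only [mem_filter, mem_erase]
        constructor
        · rintro ⟨hx, ⟨hni, -⟩, ⟨hnj, -⟩⟩
          exact ⟨fun h => hnj h.symm, fun h => hni h.symm, hx⟩
        · rintro ⟨hnj, hni, hx⟩
          exact ⟨hx, ⟨fun h => hni h.symm, hiC⟩, ⟨fun h => hnj h.symm, hjC⟩⟩
      rw [h, card_erase_of_mem (mem_erase.2 ⟨fun h => hij h.symm, hjC⟩),
        card_erase_of_mem hiC, hC]
      omega
    · rw [count_eq_aux m Y hY (fun Z => i ∈ Z ∧ j ∉ Z)]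
      have h : Yᶜ.filter (fun x => i ∈ Yᶜ.erase x ∧ j ∉ Yᶜ.erase x) = {j} := by
        ext x
        simp only [mem_filter, mem_erase, mem_singleton]
        constructor
        · rintro ⟨hx, -, hnj⟩
          by_contra hne
          exact hnj ⟨fun h => hne h.symm, hjC⟩
        · rintro rfl
          exact ⟨hjC, ⟨hij, hiC⟩, fun h => h.1 rfl⟩
      rw [h, card_singleton]
    · rw [count_eq_aux m Y hY (fun Z => i ∉ Z ∧ j ∈ Z)]
      have h : Yᶜ.filter (fun x => i ∉ Yᶜ.erase x ∧ j ∈ Yᶜ.erase x) = {i} := by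
        ext x
        simp only [mem_filter, mem_erase, mem_singleton]
        constructor
        · rintro ⟨hx, hni, -⟩
          by_contra hne
          exact hni ⟨fun h => hne h.symm, hiC⟩
        · rintro rfl
          exact ⟨hiC, fun h => h.1 rfl, ⟨Ne.symm hij, hjC⟩⟩
      rw [h, card_singleton]
    · rw [count_eq_aux m Y hY (fun Z => i ∉ Z ∧ j ∉ Z)]
      rw [Finset.card_eq_zero, Finset.filter_eq_empty_iff]
      intro x hx h
      rcases h with ⟨hni, hnj⟩
      by_cases hxi : x = i
      · subst hxi
        exact hnj (Finset.mem_erase.2 ⟨Ne.symm hij, hjC⟩)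
      · exact hni (Finset.mem_erase.2 ⟨fun h => hxi h.symm, hiC⟩)
end

section
/- Let m ≥ 2. For 1 ≤ i ≤ 2m, let f_i = f_{i,2m+1} be the function on m-subsets of {1,...,2m+1} with value 1 on sets containing i but not 2m+1, value −1 on sets containing 2m+1 but not i, and 0 otherwise, regarded as vectors in ℝ^{V}. Then ⟨f_i, f_i⟩ = 2·C(2m−1, m−1) for all i, and ⟨f_i, f_j⟩ = C(2m−1, m−1) for all i ≠ j; consequently the Gram matrix equals C(2m−1,m−1)·(J+I) and the vectors f_1, ..., f_{2m} are linearly independent. -/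
open Finset

lemma count_sub {α : Type*} [DecidableEq α] (s a : Finset α) (ha : a ⊆ s) (k : ℕ) :
    ((s.powersetCard (k + a.card)).filter (fun Y => a ⊆ Y)).card
      = (s.card - a.card).choose k := by
  have hbij : ((s.powersetCard (k + a.card)).filter (fun Y => a ⊆ Y)).card
      = ((s \ a).powersetCard k).card := by
    apply Finset.card_bij' (fun Y _ => Y \ a) (fun t _ => t ∪ a)
    · intro Y hY
      simp only [mem_filter, mem_powersetCard] at hY ⊢
      obtain ⟨⟨hYs, hYc⟩, haY⟩ := hY
      constructor
      · exact sdiff_subset_sdiff hYs (Finset.Subset.refl a)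
      · rw [card_sdiff_of_subset haY, hYc]; omega
    · intro t ht
      simp only [mem_filter, mem_powersetCard] at ht ⊢
      obtain ⟨hts, htc⟩ := ht
      have hdis : Disjoint t a := disjoint_of_subset_left hts sdiff_disjoint
      refine ⟨⟨union_subset (hts.trans sdiff_subset) ha, ?_⟩, subset_union_right⟩
      rw [card_union_of_disjoint hdis, htc]
    · intro Y hY
      simp only [mem_filter] at hY
      exact sdiff_union_of_subset hY.2
    · intro t ht
      simp only [mem_powersetCard] at ht
      have hdis : Disjoint t a := disjoint_of_subset_left ht.1 sdiff_disjoint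
      rw [union_sdiff_distrib, sdiff_self]; simp [Finset.sdiff_eq_self_iff_disjoint.mpr hdis]
  rw [hbij, card_powersetCard, card_sdiff_of_subset ha]

lemma count1 {α : Type*} [DecidableEq α] (w : α) (s : Finset α) (hws : w ∈ s) (n : ℕ) :
    ((s.powersetCard (n + 1)).filter (fun Y => w ∈ Y)).card
      = (s.card - 1).choose n := by
  have h := count_sub s {w} (singleton_subset_iff.mpr hws) n
  simp only [card_singleton, singleton_subset_iff] at h
  exact h

lemma count2 {α : Type*} [DecidableEq α] (v w : α) (hvw : v ≠ w) (s : Finset α)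
    (hv : v ∈ s) (hw : w ∈ s) (n : ℕ) :
    ((s.powersetCard (n + 2)).filter (fun Y => v ∈ Y ∧ w ∈ Y)).card
      = (s.card - 2).choose n := by
  have hc2 : ({v, w} : Finset α).card = 2 := by
    rw [card_insert_of_notMem (by simp [hvw]), card_singleton]
  have hsub : ({v, w} : Finset α) ⊆ s := by
    intro x hx; simp only [mem_insert, mem_singleton] at hx
    rcases hx with rfl | rfl <;> assumption
  have h := count_sub s {v, w} hsub n
  rw [hc2] at h
  rw [← h]
  congr 1
  ext Y
  simp only [mem_filter, insert_subset_iff, singleton_subset_iff]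

lemma sum_ind_card {α : Type*} [Fintype α] [DecidableEq α] (n : ℕ)
    (p : Finset α → Prop) [DecidablePred p] :
    ∑ Y : {Y : Finset α // Y.card = n}, (if p Y.1 then (1 : ℝ) else 0)
      = (((univ : Finset α).powersetCard n).filter p).card := by
  have h1 : ∑ Y : {Y : Finset α // Y.card = n}, (if p Y.1 then (1 : ℝ) else 0)
      = ∑ Y ∈ (univ : Finset α).powersetCard n, (if p Y then (1 : ℝ) else 0) :=
    (Finset.sum_subtype ((univ : Finset α).powersetCard n)
      (fun Y => Finset.mem_powersetCard_univ)
      (fun Y => if p Y then (1 : ℝ) else 0)).symm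
  rw [h1, Finset.sum_boole]

lemma gram_diag (k : ℕ) (z : Fin (2 * (k + 2) + 1))
    (f : Fin (2 * (k + 2) + 1) → {Y : Finset (Fin (2 * (k + 2) + 1)) // Y.card = k + 2} → ℝ)
    (hf : ∀ i Y, f i Y = if i ∈ Y.1 ∧ z ∉ Y.1 then 1
      else if z ∈ Y.1 ∧ i ∉ Y.1 then -1 else 0)
    (i : Fin (2 * (k + 2) + 1)) (hi : i ≠ z) :
    ∑ Y : {Y : Finset (Fin (2 * (k + 2) + 1)) // Y.card = k + 2}, f i Y * f i Y
      = 2 * ((2 * k + 3).choose (k + 1) : ℝ) := by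
  classical
  have hpt : ∀ Y : {Y : Finset (Fin (2 * (k + 2) + 1)) // Y.card = k + 2},
      f i Y * f i Y
        = if (i ∈ Y.1 ∧ z ∉ Y.1) ∨ (z ∈ Y.1 ∧ i ∉ Y.1) then (1 : ℝ) else 0 := by
    intro Y
    rw [hf]
    split_ifs <;> first | (exfalso; tauto) | norm_num
  rw [Finset.sum_congr rfl (fun Y _ => hpt Y),
    sum_ind_card (k + 2) (fun Y => (i ∈ Y ∧ z ∉ Y) ∨ (z ∈ Y ∧ i ∉ Y))]
  rw [Finset.filter_or]
  rw [Finset.card_union_of_disjoint (by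
    rw [Finset.disjoint_left]
    intro Y hY1 hY2
    simp only [mem_filter] at hY1 hY2
    exact hY1.2.2 hY2.2.1)]
  have e1 : ((univ : Finset (Fin (2 * (k + 2) + 1))).powersetCard (k + 2)).filter
      (fun Y => i ∈ Y ∧ z ∉ Y)
      = (((univ : Finset (Fin (2 * (k + 2) + 1))).erase z).powersetCard (k + 2)).filter
          (fun Y => i ∈ Y) := by
    ext Y
    simp only [mem_filter, mem_powersetCard, mem_powersetCard_univ, subset_erase, subset_univ]
    tauto
  have e2 : ((univ : Finset (Fin (2 * (k + 2) + 1))).powersetCard (k + 2)).filter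
      (fun Y => z ∈ Y ∧ i ∉ Y)
      = (((univ : Finset (Fin (2 * (k + 2) + 1))).erase i).powersetCard (k + 2)).filter
          (fun Y => z ∈ Y) := by
    ext Y
    simp only [mem_filter, mem_powersetCard, mem_powersetCard_univ, subset_erase, subset_univ]
    tauto
  rw [e1, e2, count1 i _ (by simp [Finset.mem_erase, hi]) (k + 1),
    count1 z _ (by simp [Finset.mem_erase, Ne.symm hi]) (k + 1)]
  rw [Finset.card_erase_of_mem (mem_univ z), Finset.card_erase_of_mem (mem_univ i),
    Finset.card_univ, Fintype.card_fin]
  have e3 : 2 * (k + 2) + 1 - 1 - 1 = 2 * k + 3 := by omega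
  rw [e3]
  push_cast
  ring

lemma gram_offdiag (k : ℕ) (z : Fin (2 * (k + 2) + 1))
    (f : Fin (2 * (k + 2) + 1) → {Y : Finset (Fin (2 * (k + 2) + 1)) // Y.card = k + 2} → ℝ)
    (hf : ∀ i Y, f i Y = if i ∈ Y.1 ∧ z ∉ Y.1 then 1
      else if z ∈ Y.1 ∧ i ∉ Y.1 then -1 else 0)
    (i j : Fin (2 * (k + 2) + 1)) (hi : i ≠ z) (hj : j ≠ z) (hij : i ≠ j) :
    ∑ Y : {Y : Finset (Fin (2 * (k + 2) + 1)) // Y.card = k + 2}, f i Y * f j Y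
      = ((2 * k + 3).choose (k + 1) : ℝ) := by
  classical
  have hpt : ∀ Y : {Y : Finset (Fin (2 * (k + 2) + 1)) // Y.card = k + 2},
      f i Y * f j Y
        = if (i ∈ Y.1 ∧ j ∈ Y.1 ∧ z ∉ Y.1) ∨ (z ∈ Y.1 ∧ i ∉ Y.1 ∧ j ∉ Y.1)
            then (1 : ℝ) else 0 := by
    intro Y
    rw [hf, hf]
    split_ifs <;> first | (exfalso; tauto) | norm_num
  rw [Finset.sum_congr rfl (fun Y _ => hpt Y),
    sum_ind_card (k + 2)
      (fun Y => (i ∈ Y ∧ j ∈ Y ∧ z ∉ Y) ∨ (z ∈ Y ∧ i ∉ Y ∧ j ∉ Y))]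
  rw [Finset.filter_or]
  rw [Finset.card_union_of_disjoint (by
    rw [Finset.disjoint_left]
    intro Y hY1 hY2
    simp only [mem_filter] at hY1 hY2
    exact hY1.2.2.2 hY2.2.1)]
  have e1 : ((univ : Finset (Fin (2 * (k + 2) + 1))).powersetCard (k + 2)).filter
      (fun Y => i ∈ Y ∧ j ∈ Y ∧ z ∉ Y)
      = (((univ : Finset (Fin (2 * (k + 2) + 1))).erase z).powersetCard (k + 2)).filter
          (fun Y => i ∈ Y ∧ j ∈ Y) := by
    ext Y
    simp only [mem_filter, mem_powersetCard, mem_powersetCard_univ, subset_erase, subset_univ]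
    tauto
  have e2 : ((univ : Finset (Fin (2 * (k + 2) + 1))).powersetCard (k + 2)).filter
      (fun Y => z ∈ Y ∧ i ∉ Y ∧ j ∉ Y)
      = ((((univ : Finset (Fin (2 * (k + 2) + 1))).erase i).erase j).powersetCard (k + 2)).filter
          (fun Y => z ∈ Y) := by
    ext Y
    simp only [mem_filter, mem_powersetCard, mem_powersetCard_univ, subset_erase, subset_univ]
    tauto
  rw [e1, e2,
    count2 i j hij _ (by simp [Finset.mem_erase, hi]) (by simp [Finset.mem_erase, hj]) k,
    count1 z _ (by simp [Finset.mem_erase, Ne.symm hi, Ne.symm hj]) (k + 1)]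
  rw [Finset.card_erase_of_mem (mem_univ z),
    Finset.card_erase_of_mem (by simp [Finset.mem_erase, Ne.symm hij] : j ∈ (univ : Finset (Fin (2 * (k + 2) + 1))).erase i),
    Finset.card_erase_of_mem (mem_univ i),
    Finset.card_univ, Fintype.card_fin]
  have e3 : 2 * (k + 2) + 1 - 1 - 2 = 2 * k + 2 := by omega
  have e4 : 2 * (k + 2) + 1 - 1 - 1 - 1 = 2 * k + 2 := by omega
  rw [e3, e4]
  have pascal : (2 * k + 2).choose k + (2 * k + 2).choose (k + 1)
      = (2 * k + 3).choose (k + 1) := (Nat.choose_succ_succ (2 * k + 2) k).symm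
  push_cast [← pascal]
  ring

lemma li_lemma (k : ℕ) (z : Fin (2 * (k + 2) + 1))
    (f : Fin (2 * (k + 2) + 1) → {Y : Finset (Fin (2 * (k + 2) + 1)) // Y.card = k + 2} → ℝ)
    (hf : ∀ i Y, f i Y = if i ∈ Y.1 ∧ z ∉ Y.1 then 1
      else if z ∈ Y.1 ∧ i ∉ Y.1 then -1 else 0) :
    LinearIndependent ℝ (fun i : {i : Fin (2 * (k + 2) + 1) // i ≠ z} => f i.1) := by
  classical
  rw [Fintype.linearIndependent_iff]
  intro g hg
  set G : Fin (2 * (k + 2) + 1) → ℝ := fun x => if h : x = z then 0 else g ⟨x, h⟩ with hG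
  have key : ∀ Y : Finset (Fin (2 * (k + 2) + 1)), Y.card = k + 2 → z ∉ Y →
      ∑ x ∈ Y, G x = 0 := by
    intro Y hc hzY
    have h0 := congrFun hg ⟨Y, hc⟩
    rw [Finset.sum_apply] at h0
    have h1 : ∀ i : {i : Fin (2 * (k + 2) + 1) // i ≠ z},
        (g i • f i.1) ⟨Y, hc⟩ = if (i : Fin (2 * (k + 2) + 1)) ∈ Y then G i.1 else 0 := by
      intro i
      rw [Pi.smul_apply, smul_eq_mul, hf]
      by_cases hiY : (i : Fin (2 * (k + 2) + 1)) ∈ Y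
      · simp [hiY, hzY, hG, dif_neg i.2]
      · simp [hiY, hzY]
    rw [Finset.sum_congr rfl (fun i _ => h1 i)] at h0
    have h2 : ∑ i : {i : Fin (2 * (k + 2) + 1) // i ≠ z},
        (if (i : Fin (2 * (k + 2) + 1)) ∈ Y then G i.1 else 0)
        = ∑ x ∈ (univ : Finset (Fin (2 * (k + 2) + 1))).erase z,
            (if x ∈ Y then G x else 0) :=
      (Finset.sum_subtype ((univ : Finset (Fin (2 * (k + 2) + 1))).erase z)
        (fun x => by simp) (fun x => if x ∈ Y then G x else 0)).symm
    have h3 : ∑ x ∈ (univ : Finset (Fin (2 * (k + 2) + 1))).erase z,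
        (if x ∈ Y then G x else 0) = ∑ x ∈ Y, G x := by
      rw [Finset.sum_ite_mem]
      congr 1
      ext x
      simp only [Finset.mem_inter, Finset.mem_erase, Finset.mem_univ, and_true]
      constructor
      · tauto
      · intro hx
        refine ⟨?_, hx⟩
        rintro rfl
        exact hzY hx
    rw [h2, h3] at h0
    exact h0
  have swap : ∀ a b : Fin (2 * (k + 2) + 1), a ≠ z → b ≠ z → a ≠ b → G a = G b := by
    intro a b haz hbz hab
    have hcard : ((((univ : Finset (Fin (2 * (k + 2) + 1))).erase z).erase a).erase b).card
        = 2 * k + 2 := by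
      rw [Finset.card_erase_of_mem (by simp [Finset.mem_erase, Ne.symm hab, hbz]),
        Finset.card_erase_of_mem (by simp [Finset.mem_erase, haz]),
        Finset.card_erase_of_mem (mem_univ z), Finset.card_univ, Fintype.card_fin]
      omega
    obtain ⟨t, hts, htc⟩ := Finset.exists_subset_card_eq (by omega : k + 1 ≤ ((((univ : Finset (Fin (2 * (k + 2) + 1))).erase z).erase a).erase b).card)
    have hmem : ∀ x ∈ t, x ≠ b ∧ x ≠ a ∧ x ≠ z := by
      intro x hx
      have := hts hx
      simp only [Finset.mem_erase, Finset.mem_univ, and_true] at this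
      tauto
    have hat : a ∉ t := fun h => ((hmem a h).2.1) rfl
    have hbt : b ∉ t := fun h => ((hmem b h).1) rfl
    have hzt : z ∉ t := fun h => ((hmem z h).2.2) rfl
    have hY1 := key (insert a t) (by rw [Finset.card_insert_of_notMem hat, htc])
      (by simp only [Finset.mem_insert, not_or]; exact ⟨Ne.symm haz, hzt⟩)
    have hY2 := key (insert b t) (by rw [Finset.card_insert_of_notMem hbt, htc])
      (by simp only [Finset.mem_insert, not_or]; exact ⟨Ne.symm hbz, hzt⟩)
    rw [Finset.sum_insert hat] at hY1
    rw [Finset.sum_insert hbt] at hY2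
    linarith
  suffices hGz : ∀ a : Fin (2 * (k + 2) + 1), a ≠ z → G a = 0 by
    intro i
    have h := hGz i.1 i.2
    have e : G i.1 = g i := dif_neg i.2
    rwa [e] at h
  intro a haz
  have hcard : (((univ : Finset (Fin (2 * (k + 2) + 1))).erase z).erase a).card
      = 2 * k + 3 := by
    rw [Finset.card_erase_of_mem (by simp [Finset.mem_erase, haz]),
      Finset.card_erase_of_mem (mem_univ z), Finset.card_univ, Fintype.card_fin]
    omega
  obtain ⟨t, hts, htc⟩ := Finset.exists_subset_card_eq
    (by omega : k + 1 ≤ (((univ : Finset (Fin (2 * (k + 2) + 1))).erase z).erase a).card)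
  have hmem : ∀ x ∈ t, x ≠ a ∧ x ≠ z := by
    intro x hx
    have := hts hx
    simp only [Finset.mem_erase, Finset.mem_univ, and_true] at this
    tauto
  have hat : a ∉ t := fun h => ((hmem a h).1) rfl
  have hzt : z ∉ t := fun h => ((hmem z h).2) rfl
  have h0 := key (insert a t) (by rw [Finset.card_insert_of_notMem hat, htc])
    (by simp only [Finset.mem_insert, not_or]; exact ⟨Ne.symm haz, hzt⟩)
  rw [Finset.sum_insert hat] at h0
  have hsum : ∑ x ∈ t, G x = (k + 1 : ℝ) * G a := by
    rw [Finset.sum_congr rfl (fun x hx => swap x a ((hmem x hx).2) haz ((hmem x hx).1)),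
      Finset.sum_const, htc, nsmul_eq_mul]
    push_cast
    ring
  rw [hsum] at h0
  have hk : (k + 2 : ℝ) ≠ 0 := by positivity
  have : (k + 2 : ℝ) * G a = 0 := by linarith
  exact (mul_eq_zero.mp this).resolve_left hk



/-- With `f_i = f_{i,2m+1}` (here 0-based: the last point of
`Fin (2m+1)` is `⟨2m,_⟩`) viewed as vectors indexed by the `m`-subsets, one has
`⟨f_i, f_i⟩ = 2·C(2m-1, m-1)`, `⟨f_i, f_j⟩ = C(2m-1, m-1)` for `i ≠ j`
(so the Gram matrix is `C(2m-1,m-1)·(J+I)`), and `f_1, …, f_{2m}` are linearly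
independent. -/
theorem odd_graph_eigenfunctions_gram_and_independent
    (m : ℕ) (hm : 2 ≤ m)
    (f : Fin (2 * m + 1) → {Y : Finset (Fin (2 * m + 1)) // Y.card = m} → ℝ)
    (hf : ∀ (i : Fin (2 * m + 1)) (Y : {Y : Finset (Fin (2 * m + 1)) // Y.card = m}),
      f i Y = if i ∈ Y.1 ∧ (⟨2 * m, by omega⟩ : Fin (2 * m + 1)) ∉ Y.1 then 1
        else if (⟨2 * m, by omega⟩ : Fin (2 * m + 1)) ∈ Y.1 ∧ i ∉ Y.1 then -1
        else 0) :
    (∀ i : Fin (2 * m + 1), i ≠ ⟨2 * m, by omega⟩ →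
      ∑ Y : {Y : Finset (Fin (2 * m + 1)) // Y.card = m}, f i Y * f i Y =
        2 * (Nat.choose (2 * m - 1) (m - 1) : ℝ)) ∧
    (∀ i j : Fin (2 * m + 1), i ≠ ⟨2 * m, by omega⟩ → j ≠ ⟨2 * m, by omega⟩ →
      i ≠ j →
      ∑ Y : {Y : Finset (Fin (2 * m + 1)) // Y.card = m}, f i Y * f j Y =
        (Nat.choose (2 * m - 1) (m - 1) : ℝ)) ∧
    LinearIndependent ℝ
      (fun i : {i : Fin (2 * m + 1) // i ≠ ⟨2 * m, by omega⟩} => f i.1) := by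
  obtain ⟨k, rfl⟩ : ∃ k, m = k + 2 := ⟨m - 2, by omega⟩
  have e3 : 2 * (k + 2) - 1 = 2 * k + 3 := by omega
  have e4 : (k + 2) - 1 = k + 1 := by omega
  refine ⟨?_, ?_, ?_⟩
  · intro i hi
    rw [e3, e4]
    exact gram_diag k _ f hf i hi
  · intro i j hi hj hij
    rw [e3, e4]
    exact gram_offdiag k _ f hf i j hi hj hij
  · exact li_lemma k _ f hf
end

section
/- Let m ≥ 2 and 1 ≤ t ≤ m−1. Let B = PA, where A is the adjacency matrix of the Odd graph O_{m+1} and P is the permutation matrix of the involution induced by τ_t = (1 2)···(2t−1 2t). Then the eigenvalue m of B has multiplicity at least t: for each 1 ≤ i ≤ t, the function f_{2i−1,2m+1} − f_{2i,2m+1} satisfies B(f_{2i−1,2m+1} − f_{2i,2m+1}) = m(f_{2i−1,2m+1} − f_{2i,2m+1}), and these t functions are linearly independent. -/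
open Finset

lemma count_aux {n m : ℕ} (S : Finset (Fin n)) (hS : S.card = m + 1) (x : Fin n) :
    ∑ X ∈ S.powersetCard m, (if x ∈ X then (1:ℝ) else 0)
      = if x ∈ S then (m:ℝ) else 0 := by
  rw [Finset.sum_boole]
  by_cases hx : x ∈ S
  · have h1 : (S.powersetCard m).filter (fun X => ¬ x ∈ X) = {S.erase x} := by
      ext X
      simp only [Finset.mem_filter, Finset.mem_powersetCard, Finset.mem_singleton]
      constructor
      · rintro ⟨⟨hsub, hcard⟩, hxX⟩
        apply Finset.eq_of_subset_of_card_le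
        · intro y hy
          exact Finset.mem_erase.2 ⟨fun h => hxX (h ▸ hy), hsub hy⟩
        · rw [Finset.card_erase_of_mem hx, hS, hcard]; omega
      · rintro rfl
        exact ⟨⟨Finset.erase_subset _ _, by rw [Finset.card_erase_of_mem hx, hS]; omega⟩,
          Finset.notMem_erase _ _⟩
    have h2 := Finset.card_filter_add_card_filter_not
      (s := S.powersetCard m) (p := fun X => x ∈ X)
    rw [Finset.card_powersetCard, hS, Nat.choose_succ_self_right, h1,
      Finset.card_singleton] at h2
    rw [if_pos hx]
    have h3 : ((S.powersetCard m).filter (fun X => x ∈ X)).card = m := by omega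
    rw [h3]
  · rw [if_neg hx]
    have h0 : (S.powersetCard m).filter (fun X => x ∈ X) = ∅ := by
      ext X
      simp only [Finset.mem_filter, Finset.mem_powersetCard, Finset.notMem_empty, iff_false,
        not_and]
      rintro ⟨hsub, -⟩ hxX
      exact hx (hsub hxX)
    rw [h0]
    simp

/-- Let `m ≥ 2`, `1 ≤ t ≤ m-1`, `A` the adjacency matrix of the
Odd graph `O_{m+1}` (vertices: `m`-subsets of `Fin (2m+1)`, adjacency:
disjointness), `P` the permutation matrix of the involution induced by
`τ = (0 1)(2 3)⋯(2t-2 2t-1)` (0-based), and `B = PA`. Then the eigenvalue `m`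
of `B` has multiplicity at least `t`: each of the `t` functions
`f_{2k, 2m} - f_{2k+1, 2m}` (0-based versions of `f_{2i-1,2m+1} - f_{2i,2m+1}`,
`1 ≤ i ≤ t`) is an `m`-eigenvector of `B`, and they are linearly independent. -/
theorem dual_seidel_odd_graph_eigenvalue_m_multiplicity
    (m t : ℕ) (hm : 2 ≤ m) (ht1 : 1 ≤ t) (ht2 : t ≤ m - 1)
    (τ : Equiv.Perm (Fin (2 * m + 1)))
    (hτ : ∀ x : Fin (2 * m + 1),
      (τ x).val = if x.val < 2 * t then 2 * (x.val / 2) + (1 - x.val % 2) else x.val)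
    (A P : Matrix {Y : Finset (Fin (2 * m + 1)) // Y.card = m}
                  {Y : Finset (Fin (2 * m + 1)) // Y.card = m} ℝ)
    (hA : ∀ Y Z, A Y Z = if Disjoint Y.1 Z.1 then 1 else 0)
    (hP : ∀ Y Z, P Y Z = if Y.1 = Z.1.image τ then 1 else 0)
    (f : Fin (2 * m + 1) → {Y : Finset (Fin (2 * m + 1)) // Y.card = m} → ℝ)
    (hf : ∀ (i : Fin (2 * m + 1)) (Y : {Y : Finset (Fin (2 * m + 1)) // Y.card = m}),
      f i Y = if i ∈ Y.1 ∧ (⟨2 * m, by omega⟩ : Fin (2 * m + 1)) ∉ Y.1 then 1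
        else if (⟨2 * m, by omega⟩ : Fin (2 * m + 1)) ∈ Y.1 ∧ i ∉ Y.1 then -1
        else 0)
    (g : Fin t → {Y : Finset (Fin (2 * m + 1)) // Y.card = m} → ℝ)
    (hg : ∀ k : Fin t,
      g k = f ⟨2 * k.val, by have := k.isLt; omega⟩ -
            f ⟨2 * k.val + 1, by have := k.isLt; omega⟩) :
    (∀ k : Fin t, (P * A).mulVec (g k) = (m : ℝ) • g k) ∧
    LinearIndependent ℝ g := by
  have htm : 2 * t ≤ 2 * m - 2 := by omega
  -- abbreviations for the relevant Fin elements
  set a : Fin t → Fin (2 * m + 1) :=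
    fun k => ⟨2 * k.val, by have := k.isLt; omega⟩ with ha_def
  set b : Fin t → Fin (2 * m + 1) :=
    fun k => ⟨2 * k.val + 1, by have := k.isLt; omega⟩ with hb_def
  -- τ is an involution
  have hτinv : ∀ x, τ (τ x) = x := by
    intro x
    have h1 := hτ x
    have h2 := hτ (τ x)
    rw [h1] at h2
    apply Fin.ext
    rw [h2]
    have := x.isLt
    split_ifs at h1 ⊢ <;> omega
  -- τ swaps a k and b k
  have hτa : ∀ k, τ (a k) = b k := by
    intro k
    apply Fin.ext
    rw [hτ]
    have := k.isLt
    simp only [ha_def, hb_def]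
    split_ifs <;> omega
  have hτb : ∀ k, τ (b k) = a k := by
    intro k
    apply Fin.ext
    rw [hτ]
    have := k.isLt
    simp only [ha_def, hb_def]
    split_ifs <;> omega
  -- simplified form of g
  have hgZ : ∀ (k : Fin t) (Z : {Y : Finset (Fin (2 * m + 1)) // Y.card = m}),
      g k Z = (if a k ∈ Z.1 then (1:ℝ) else 0) - (if b k ∈ Z.1 then 1 else 0) := by
    intro k Z
    rw [hg]
    simp only [Pi.sub_apply]
    rw [hf, hf]
    by_cases h1 : a k ∈ Z.1 <;> by_cases h2 : b k ∈ Z.1 <;>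
      by_cases h3 : (⟨2 * m, by omega⟩ : Fin (2 * m + 1)) ∈ Z.1 <;>
      (simp only [ha_def, hb_def] at h1 h2 ⊢; simp [h1, h2, h3])
  constructor
  · -- eigenvector property
    intro k
    have hki := k.isLt
    funext Y
    -- compute the row of P * A
    have hYτcard : (Y.1.image τ).card = m := by
      rw [Finset.card_image_of_injective _ τ.injective, Y.2]
    have hPA : ∀ Z, (P * A) Y Z = if Disjoint (Y.1.image τ) Z.1 then (1:ℝ) else 0 := by
      intro Z
      rw [Matrix.mul_apply]
      rw [Finset.sum_eq_single (⟨Y.1.image τ, hYτcard⟩ :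
        {Y : Finset (Fin (2 * m + 1)) // Y.card = m})]
      · rw [hP, hA]
        have himg : Y.1 = (Y.1.image τ).image τ := by
          rw [Finset.image_image]
          have : τ ∘ τ = id := funext hτinv
          rw [this, Finset.image_id]
        rw [if_pos himg, one_mul]
      · intro W _ hW
        rw [hP, if_neg, zero_mul]
        intro hYW
        apply hW
        apply Subtype.ext
        show W.1 = Y.1.image τ
        rw [hYW, Finset.image_image]
        have : τ ∘ τ = id := funext hτinv
        rw [this, Finset.image_id]
      · intro h
        exact absurd (Finset.mem_univ _) h
    have hmv : (P * A).mulVec (g k) Y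
        = ∑ Z : {Y : Finset (Fin (2 * m + 1)) // Y.card = m},
            (if Disjoint (Y.1.image τ) Z.1 then (1:ℝ) else 0) * g k Z := by
      simp only [Matrix.mulVec, dotProduct]
      refine Finset.sum_congr rfl fun Z _ => ?_
      simp only [hPA]
    rw [Pi.smul_apply, smul_eq_mul, hmv]
    set S : Finset (Fin (2 * m + 1)) := (Y.1.image τ)ᶜ with hS_def
    have hScard : S.card = m + 1 := by
      rw [hS_def, Finset.card_compl, hYτcard]
      simp only [Fintype.card_fin]
      omega
    have hdisj : ∀ Z : Finset (Fin (2 * m + 1)), Disjoint (Y.1.image τ) Z ↔ Z ⊆ S := by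
      intro Z
      rw [hS_def]
      exact (le_compl_iff_disjoint_left).symm
    -- turn the subtype sum into a sum over powersetCard
    have hsum : ∑ Z : {Y : Finset (Fin (2 * m + 1)) // Y.card = m},
        (if Disjoint (Y.1.image τ) Z.1 then (1:ℝ) else 0) * g k Z
        = ∑ X ∈ S.powersetCard m,
            ((if a k ∈ X then (1:ℝ) else 0) - (if b k ∈ X then 1 else 0)) := by
      have e1 : ∑ Z : {Y : Finset (Fin (2 * m + 1)) // Y.card = m},
          (if Disjoint (Y.1.image τ) Z.1 then (1:ℝ) else 0) * g k Z
          = ∑ Z : {Y : Finset (Fin (2 * m + 1)) // Y.card = m},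
            (if Z.1 ⊆ S then
              ((if a k ∈ Z.1 then (1:ℝ) else 0) - (if b k ∈ Z.1 then 1 else 0)) else 0) := by
        refine Finset.sum_congr rfl fun Z _ => ?_
        rw [hgZ]
        by_cases h : Z.1 ⊆ S
        · rw [if_pos ((hdisj _).2 h), if_pos h, one_mul]
        · rw [if_neg (fun hd => h ((hdisj _).1 hd)), if_neg h, zero_mul]
      rw [e1]
      rw [← Finset.sum_subtype (Finset.univ.filter
          (fun X : Finset (Fin (2 * m + 1)) => X.card = m)) (by simp)
          (fun X => if X ⊆ S then
            ((if a k ∈ X then (1:ℝ) else 0) - (if b k ∈ X then 1 else 0)) else 0)]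
      rw [← Finset.sum_filter]
      apply Finset.sum_congr _ (fun _ _ => rfl)
      ext X
      simp only [Finset.mem_filter, Finset.mem_univ, true_and, Finset.mem_powersetCard]
      tauto
    rw [hsum, Finset.sum_sub_distrib, count_aux S hScard, count_aux S hScard]
    -- membership translations
    have haS : a k ∈ S ↔ b k ∉ Y.1 := by
      rw [hS_def, Finset.mem_compl]
      constructor
      · intro h hb
        exact h (by rw [← hτb k]; exact Finset.mem_image_of_mem τ hb)
      · intro h ha
        obtain ⟨y, hy, hya⟩ := Finset.mem_image.1 ha
        have : y = b k := by
          have := hτinv y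
          rw [hya] at this
          rw [← this, hτa]
        exact h (this ▸ hy)
    have hbS : b k ∈ S ↔ a k ∉ Y.1 := by
      rw [hS_def, Finset.mem_compl]
      constructor
      · intro h ha
        have : τ (a k) ∈ Y.1.image τ := Finset.mem_image_of_mem τ ha
        rw [hτa] at this
        exact h this
      · intro h hb
        obtain ⟨y, hy, hyb⟩ := Finset.mem_image.1 hb
        have : y = a k := by
          have := hτinv y
          rw [hyb] at this
          rw [← this, hτb]
        exact h (this ▸ hy)
    rw [hgZ]
    by_cases h1 : a k ∈ Y.1 <;> by_cases h2 : b k ∈ Y.1 <;>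
      simp [haS, hbS, h1, h2]
  · -- linear independence
    rw [Fintype.linearIndependent_iff]
    intro co hco
    suffices H : ∀ n : ℕ, ∀ j : Fin t, t - j.val ≤ n → co j = 0 by
      intro j
      exact H t j (by omega)
    intro n
    induction n with
    | zero => intro j hj; have := j.isLt; omega
    | succ n ih =>
      intro j hj
      have hjt := j.isLt
      -- construct the evaluation point Z
      set e : ℕ := 2 * j.val + m % 2 - m with he_def
      set s : ℕ := m + 2 + e with hs_def
      have hee : e % 2 = 0 := by omega
      have hej : e ≤ 2 * j.val := by omega
      have hjs : 2 * j.val + 1 < s := by omega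
      have hem : e ≤ m - 3 := by omega
      set NS : Finset ℕ :=
        insert (2 * j.val) (Finset.Ico 0 e ∪ Finset.Ico s (2 * m + 1)) with hNS_def
      have hmemNS : ∀ x, x ∈ NS ↔ (x = 2 * j.val ∨ x < e ∨ (s ≤ x ∧ x < 2 * m + 1)) := by
        intro x
        simp [hNS_def, Finset.mem_Ico]
      have hbound : ∀ x ∈ NS, x < 2 * m + 1 := by
        intro x hx
        rw [hmemNS] at hx
        rcases hx with h | h | h <;> omega
      have hcardNS : NS.card = m := by
        rw [hNS_def, Finset.card_insert_of_notMem, Finset.card_union_of_disjoint]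
        · simp only [Nat.card_Ico]
          omega
        · rw [Finset.disjoint_left]
          intro x hx hx'
          simp only [Finset.mem_Ico] at hx hx'
          omega
        · simp only [Finset.mem_union, Finset.mem_Ico]
          push_neg
          omega
      set Z : {Y : Finset (Fin (2 * m + 1)) // Y.card = m} :=
        ⟨NS.attachFin hbound, by rw [Finset.card_attachFin]; exact hcardNS⟩ with hZ_def
      have hmemZ : ∀ x : Fin (2 * m + 1),
          x ∈ Z.1 ↔ (x.val = 2 * j.val ∨ x.val < e ∨ s ≤ x.val) := by
        intro x
        rw [hZ_def]
        simp only [Finset.mem_attachFin]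
        rw [hmemNS]
        have := x.isLt
        constructor
        · rintro (h | h | h) <;> omega
        · rintro (h | h | h) <;> omega
      have hev := congrFun hco Z
      simp only [Finset.sum_apply, Pi.smul_apply, smul_eq_mul, Pi.zero_apply] at hev
      rw [Finset.sum_eq_single j] at hev
      · -- g j Z = 1
        have hgj : g j Z = 1 := by
          rw [hgZ]
          have h1 : a j ∈ Z.1 := by rw [hmemZ]; left; rfl
          have h2 : b j ∉ Z.1 := by
            rw [hmemZ]
            push_neg
            simp only [ha_def, hb_def]
            omega
          rw [if_pos h1, if_neg h2]
          norm_num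
        rw [hgj, mul_one] at hev
        exact hev
      · intro k _ hk
        rcases lt_or_gt_of_ne (show k.val ≠ j.val from fun h => hk (Fin.ext h)) with hlt | hgt
        · -- k < j : g k Z = 0
          have hkj : k.val < j.val := hlt
          have hgk : g k Z = 0 := by
            rw [hgZ]
            have hiff : (a k ∈ Z.1) ↔ (b k ∈ Z.1) := by
              rw [hmemZ, hmemZ]
              simp only [ha_def, hb_def]
              constructor
              · rintro (h | h | h) <;> omega
              · rintro (h | h | h) <;> omega
            by_cases h : a k ∈ Z.1
            · rw [if_pos h, if_pos (hiff.1 h)]; ring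
            · rw [if_neg h, if_neg (fun hb => h (hiff.2 hb))]; ring
          rw [hgk, mul_zero]
        · -- k > j : co k = 0 by induction hypothesis
          have : co k = 0 := ih k (by omega)
          rw [this, zero_mul]
      · intro h
        exact absurd (Finset.mem_univ _) h
end
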